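/- Chaplygin's invariant measure on ℝ⁶: let B be a symmetric invertible 3×3 real matrix and κ ∈ ℝ. On the open set U = {(L, γ) ∈ ℝ³ × ℝ³ : 1 − κ⟨γ, B⁻¹γ⟩ > 0}, define Ω(L, γ) = B⁻¹L + (κ⟨γ, B⁻¹L⟩ / (1 − κ⟨γ, B⁻¹γ⟩)) B⁻¹γ, the vector field Y(L, γ) = (L × Ω(L,γ), γ × Ω(L,γ)), and the density f(L, γ) = (1 − κ⟨γ, B⁻¹γ⟩)^{−1/2}. Then the divergence of the vector field f·Y vanishes identically on U; equivalently, f(γ) dL₁dL₂dL₃ dγ₁dγ₂dγ₃ is an invariant measure of Chaplygin's marble equations on ℝ⁶. -/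

import Mathlib

open Matrix

/-- Euclidean inner product on ℝ³. -/
def dot3 (u v : Fin 3 → ℝ) : ℝ := u 0 * v 0 + u 1 * v 1 + u 2 * v 2

/-- Cross product on ℝ³. -/
def cross3 (u v : Fin 3 → ℝ) : Fin 3 → ℝ :=
  ![u 1 * v 2 - u 2 * v 1, u 2 * v 0 - u 0 * v 2, u 0 * v 1 - u 1 * v 0]

/-- The angular velocity `Ω(L, γ)` of Chaplygin's marble, inverting
`L = BΩ − κ⟨γ,Ω⟩γ` (with `p = (L, γ)`). -/
noncomputable def chapOmega (B : Matrix (Fin 3) (Fin 3) ℝ) (κ : ℝ)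
    (p : (Fin 3 → ℝ) × (Fin 3 → ℝ)) : Fin 3 → ℝ :=
  B⁻¹.mulVec p.1
    + ((κ * dot3 p.2 (B⁻¹.mulVec p.1)) / (1 - κ * dot3 p.2 (B⁻¹.mulVec p.2)))
        • B⁻¹.mulVec p.2

/-- The vector field of Chaplygin's marble equations on ℝ⁶:
`Y(L, γ) = (L × Ω(L,γ), γ × Ω(L,γ))`. -/
noncomputable def chapY (B : Matrix (Fin 3) (Fin 3) ℝ) (κ : ℝ)
    (p : (Fin 3 → ℝ) × (Fin 3 → ℝ)) : (Fin 3 → ℝ) × (Fin 3 → ℝ) :=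
  (cross3 p.1 (chapOmega B κ p), cross3 p.2 (chapOmega B κ p))

/-- Chaplygin's measure density `f(L, γ) = (1 − κ⟨γ, B⁻¹γ⟩)^{−1/2}`. -/
noncomputable def chapDensity (B : Matrix (Fin 3) (Fin 3) ℝ) (κ : ℝ)
    (p : (Fin 3 → ℝ) × (Fin 3 → ℝ)) : ℝ :=
  (1 - κ * dot3 p.2 (B⁻¹.mulVec p.2)) ^ (-(1 : ℝ) / 2)

/- ==================== auxiliary machinery ==================== -/

abbrev V6 := (Fin 3 → ℝ) × (Fin 3 → ℝ)

lemma trace_formula (T : V6 →ₗ[ℝ] V6) :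
    LinearMap.trace ℝ V6 T =
      ∑ k : Fin 3, (T (Pi.single k 1, 0)).1 k + ∑ k : Fin 3, (T (0, Pi.single k 1)).2 k := by
  rw [LinearMap.trace_eq_matrix_trace ℝ ((Pi.basisFun ℝ (Fin 3)).prod (Pi.basisFun ℝ (Fin 3)))]
  simp [Matrix.trace, Fintype.sum_sum_type, Matrix.diag, LinearMap.toMatrix_apply,
    Module.Basis.prod_repr_inl, Module.Basis.prod_repr_inr, Pi.basisFun_repr]

lemma hasDerivAt_quad (a b c : ℝ) : HasDerivAt (fun x : ℝ => a + x * b + x ^ 2 * c) b 0 := by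
  have h : HasDerivAt (fun x : ℝ => a + x * b + x ^ 2 * c)
      (0 + (1 * b + 0 * 0) + ((2:ℕ) * (0:ℝ) ^ (2-1) * c + 0 ^ 2 * 0)) 0 :=
    ((hasDerivAt_const 0 a).add ((hasDerivAt_id 0).mul (hasDerivAt_const 0 b))).add
      ((hasDerivAt_pow 2 (0:ℝ)).mul (hasDerivAt_const 0 c))
  simpa using h

lemma hasDerivAt_lineApply (h e : Fin 3 → ℝ) (i : Fin 3) :
    HasDerivAt (fun x : ℝ => (h + x • e) i) (e i) 0 := by
  have heq : (fun x : ℝ => (h + x • e) i) = fun x : ℝ => h i + x * e i + x ^ 2 * 0 := by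
    funext x; simp
  rw [heq]; exact hasDerivAt_quad _ _ _

lemma hasDerivAt_mulVecLine (c : Matrix (Fin 3) (Fin 3) ℝ) (h e : Fin 3 → ℝ) (i : Fin 3) :
    HasDerivAt (fun x : ℝ => (c.mulVec (h + x • e)) i) ((c.mulVec e) i) 0 := by
  have heq : (fun x : ℝ => (c.mulVec (h + x • e)) i)
      = fun x : ℝ => (c.mulVec h) i + x * (c.mulVec e) i + x ^ 2 * 0 := by
    funext x
    simp [Matrix.mulVec_add, Matrix.mulVec_smul]
  rw [heq]; exact hasDerivAt_quad _ _ _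

lemma hasDerivAt_dotLine (c : Matrix (Fin 3) (Fin 3) ℝ) (g e l f : Fin 3 → ℝ) :
    HasDerivAt (fun x : ℝ => dot3 (g + x • e) (c.mulVec (l + x • f)))
      (dot3 e (c.mulVec l) + dot3 g (c.mulVec f)) 0 := by
  have heq : (fun x : ℝ => dot3 (g + x • e) (c.mulVec (l + x • f)))
      = fun x : ℝ => dot3 g (c.mulVec l)
          + x * (dot3 e (c.mulVec l) + dot3 g (c.mulVec f))
          + x ^ 2 * dot3 e (c.mulVec f) := by
    funext x
    simp only [dot3, Matrix.mulVec, dotProduct, Fin.sum_univ_three, Pi.add_apply,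
      Pi.smul_apply, smul_eq_mul]
    ring
  rw [heq]; exact hasDerivAt_quad _ _ _

lemma key_deriv (κ : ℝ) (d t w v m1 m2 n1 n2 : ℝ → ℝ)
    (d' t' w' v' m1' m2' n1' n2' : ℝ)
    (hd : HasDerivAt d d' 0) (ht : HasDerivAt t t' 0)
    (hw : HasDerivAt w w' 0) (hv : HasDerivAt v v' 0)
    (hm1 : HasDerivAt m1 m1' 0) (hm2 : HasDerivAt m2 m2' 0)
    (hn1 : HasDerivAt n1 n1' 0) (hn2 : HasDerivAt n2 n2' 0)
    (hpos : 0 < d 0) :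
    HasDerivAt (fun x => d x ^ (-(1:ℝ)/2) *
        (w x * (m1 x + κ * t x / d x * n1 x) - v x * (m2 x + κ * t x / d x * n2 x)))
      (d' * (-(1:ℝ)/2) * d 0 ^ (-(1:ℝ)/2 - 1) *
          (w 0 * (m1 0 + κ * t 0 / d 0 * n1 0) - v 0 * (m2 0 + κ * t 0 / d 0 * n2 0))
        + d 0 ^ (-(1:ℝ)/2) *
          ((w' * (m1 0 + κ * t 0 / d 0 * n1 0)
            + w 0 * (m1' + ((κ * t' * d 0 - κ * t 0 * d') / d 0 ^ 2 * n1 0 + κ * t 0 / d 0 * n1')))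
           - (v' * (m2 0 + κ * t 0 / d 0 * n2 0)
            + v 0 * (m2' + ((κ * t' * d 0 - κ * t 0 * d') / d 0 ^ 2 * n2 0 + κ * t 0 / d 0 * n2'))))) 0 := by
  have hden : d 0 ≠ 0 := ne_of_gt hpos
  have hq : HasDerivAt (fun x => κ * t x / d x) ((κ * t' * d 0 - κ * t 0 * d') / d 0 ^ 2) 0 :=
    (ht.const_mul κ).div hd hden
  have h1 : HasDerivAt (fun x => m1 x + κ * t x / d x * n1 x)
      (m1' + ((κ * t' * d 0 - κ * t 0 * d') / d 0 ^ 2 * n1 0 + κ * t 0 / d 0 * n1')) 0 :=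
    hm1.add (hq.mul hn1)
  have h2 : HasDerivAt (fun x => m2 x + κ * t x / d x * n2 x)
      (m2' + ((κ * t' * d 0 - κ * t 0 * d') / d 0 ^ 2 * n2 0 + κ * t 0 / d 0 * n2')) 0 :=
    hm2.add (hq.mul hn2)
  have hr : HasDerivAt (fun x => d x ^ (-(1:ℝ)/2)) (d' * (-(1:ℝ)/2) * d 0 ^ (-(1:ℝ)/2 - 1)) 0 :=
    hd.rpow_const (Or.inl hden)
  exact hr.mul (((hw.mul h1)).sub ((hv.mul h2)))

/-- Value of the directional derivative of a diagonal component. -/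
noncomputable def VALg (c : Matrix (Fin 3) (Fin 3) ℝ) (κ : ℝ)
    (L G E1 E2 h e : Fin 3 → ℝ) (ia ib : Fin 3) : ℝ :=
  let D := 1 - κ * dot3 G (c.mulVec G)
  let T := dot3 G (c.mulVec L)
  let d' := -(κ * (dot3 E2 (c.mulVec G) + dot3 G (c.mulVec E2)))
  let t' := dot3 E2 (c.mulVec L) + dot3 G (c.mulVec E1)
  d' * (-(1:ℝ)/2) * D ^ (-(1:ℝ)/2 - 1) *
      (h ia * ((c.mulVec L) ib + κ * T / D * (c.mulVec G) ib)
        - h ib * ((c.mulVec L) ia + κ * T / D * (c.mulVec G) ia))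
    + D ^ (-(1:ℝ)/2) *
      ((e ia * ((c.mulVec L) ib + κ * T / D * (c.mulVec G) ib)
        + h ia * ((c.mulVec E1) ib + ((κ * t' * D - κ * T * d') / D ^ 2 * (c.mulVec G) ib
            + κ * T / D * (c.mulVec E2) ib)))
       - (e ib * ((c.mulVec L) ia + κ * T / D * (c.mulVec G) ia)
        + h ib * ((c.mulVec E1) ia + ((κ * t' * D - κ * T * d') / D ^ 2 * (c.mulVec G) ia
            + κ * T / D * (c.mulVec E2) ia))))

lemma blockAux (c : Matrix (Fin 3) (Fin 3) ℝ) (κ : ℝ)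
    (L G E1 E2 h e : Fin 3 → ℝ) (ia ib : Fin 3)
    (hpos : 0 < 1 - κ * dot3 G (c.mulVec G)) :
    HasDerivAt (fun x : ℝ =>
      (1 - κ * dot3 (G + x • E2) (c.mulVec (G + x • E2))) ^ (-(1:ℝ)/2) *
        ((h + x • e) ia * ((c.mulVec (L + x • E1)) ib
            + κ * dot3 (G + x • E2) (c.mulVec (L + x • E1))
                / (1 - κ * dot3 (G + x • E2) (c.mulVec (G + x • E2)))
                * (c.mulVec (G + x • E2)) ib)
         - (h + x • e) ib * ((c.mulVec (L + x • E1)) ia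
            + κ * dot3 (G + x • E2) (c.mulVec (L + x • E1))
                / (1 - κ * dot3 (G + x • E2) (c.mulVec (G + x • E2)))
                * (c.mulVec (G + x • E2)) ia)))
      (VALg c κ L G E1 E2 h e ia ib) 0 := by
  have hd : HasDerivAt (fun x : ℝ => 1 - κ * dot3 (G + x • E2) (c.mulVec (G + x • E2)))
      (-(κ * (dot3 E2 (c.mulVec G) + dot3 G (c.mulVec E2)))) 0 :=
    ((hasDerivAt_dotLine c G E2 G E2).const_mul κ).const_sub 1
  have key := key_deriv κ _ _ _ _ _ _ _ _ _ _ _ _ _ _ _ _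
    hd (hasDerivAt_dotLine c G E2 L E1)
    (hasDerivAt_lineApply h e ia) (hasDerivAt_lineApply h e ib)
    (hasDerivAt_mulVecLine c L E1 ib) (hasDerivAt_mulVecLine c L E1 ia)
    (hasDerivAt_mulVecLine c G E2 ib) (hasDerivAt_mulVecLine c G E2 ia)
    (by simpa using hpos)
  convert key using 1
  simp [VALg]

/- ==================== differentiability ==================== -/

lemma diff_fst_apply (i : Fin 3) : Differentiable ℝ (fun q : V6 => q.1 i) :=
  (differentiable_pi.mp differentiable_fst) i

lemma diff_snd_apply (i : Fin 3) : Differentiable ℝ (fun q : V6 => q.2 i) :=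
  (differentiable_pi.mp differentiable_snd) i

lemma diff_mulVec_fst (c : Matrix (Fin 3) (Fin 3) ℝ) (i : Fin 3) :
    Differentiable ℝ (fun q : V6 => (c.mulVec q.1) i) := by
  have heq : (fun q : V6 => (c.mulVec q.1) i)
      = fun q : V6 => c i 0 * q.1 0 + c i 1 * q.1 1 + c i 2 * q.1 2 := by
    funext q; simp [Matrix.mulVec, dotProduct, Fin.sum_univ_three]
  rw [heq]
  exact (((diff_fst_apply 0).const_mul _).add ((diff_fst_apply 1).const_mul _)).add
    ((diff_fst_apply 2).const_mul _)

lemma diff_mulVec_snd (c : Matrix (Fin 3) (Fin 3) ℝ) (i : Fin 3) :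
    Differentiable ℝ (fun q : V6 => (c.mulVec q.2) i) := by
  have heq : (fun q : V6 => (c.mulVec q.2) i)
      = fun q : V6 => c i 0 * q.2 0 + c i 1 * q.2 1 + c i 2 * q.2 2 := by
    funext q; simp [Matrix.mulVec, dotProduct, Fin.sum_univ_three]
  rw [heq]
  exact (((diff_snd_apply 0).const_mul _).add ((diff_snd_apply 1).const_mul _)).add
    ((diff_snd_apply 2).const_mul _)

lemma diff_t (c : Matrix (Fin 3) (Fin 3) ℝ) :
    Differentiable ℝ (fun q : V6 => dot3 q.2 (c.mulVec q.1)) := by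
  show Differentiable ℝ (fun q : V6 => q.2 0 * (c.mulVec q.1) 0 + q.2 1 * (c.mulVec q.1) 1
    + q.2 2 * (c.mulVec q.1) 2)
  exact (((diff_snd_apply 0).mul (diff_mulVec_fst c 0)).add
    ((diff_snd_apply 1).mul (diff_mulVec_fst c 1))).add
    ((diff_snd_apply 2).mul (diff_mulVec_fst c 2))

lemma diff_s (c : Matrix (Fin 3) (Fin 3) ℝ) :
    Differentiable ℝ (fun q : V6 => dot3 q.2 (c.mulVec q.2)) := by
  show Differentiable ℝ (fun q : V6 => q.2 0 * (c.mulVec q.2) 0 + q.2 1 * (c.mulVec q.2) 1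
    + q.2 2 * (c.mulVec q.2) 2)
  exact (((diff_snd_apply 0).mul (diff_mulVec_snd c 0)).add
    ((diff_snd_apply 1).mul (diff_mulVec_snd c 1))).add
    ((diff_snd_apply 2).mul (diff_mulVec_snd c 2))

/- ==================== component unfolding ==================== -/

lemma comp_eq1 (B : Matrix (Fin 3) (Fin 3) ℝ) (κ : ℝ) (p E : V6) (ia ib k : Fin 3)
    (hk : ∀ u v : Fin 3 → ℝ, cross3 u v k = u ia * v ib - u ib * v ia) :
    (fun x : ℝ => (chapDensity B κ (p + x • E) • chapY B κ (p + x • E)).1 k)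
    = (fun x : ℝ =>
      (1 - κ * dot3 (p.2 + x • E.2) (B⁻¹.mulVec (p.2 + x • E.2))) ^ (-(1:ℝ)/2) *
        ((p.1 + x • E.1) ia * ((B⁻¹.mulVec (p.1 + x • E.1)) ib
            + κ * dot3 (p.2 + x • E.2) (B⁻¹.mulVec (p.1 + x • E.1))
                / (1 - κ * dot3 (p.2 + x • E.2) (B⁻¹.mulVec (p.2 + x • E.2)))
                * (B⁻¹.mulVec (p.2 + x • E.2)) ib)
         - (p.1 + x • E.1) ib * ((B⁻¹.mulVec (p.1 + x • E.1)) ia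
            + κ * dot3 (p.2 + x • E.2) (B⁻¹.mulVec (p.1 + x • E.1))
                / (1 - κ * dot3 (p.2 + x • E.2) (B⁻¹.mulVec (p.2 + x • E.2)))
                * (B⁻¹.mulVec (p.2 + x • E.2)) ia))) := by
  funext x
  simp only [chapDensity, chapY, chapOmega, Prod.smul_fst, Pi.smul_apply, smul_eq_mul,
    Prod.fst_add, Prod.snd_add, Prod.smul_snd, hk, Pi.add_apply]

lemma comp_eq2 (B : Matrix (Fin 3) (Fin 3) ℝ) (κ : ℝ) (p E : V6) (ia ib k : Fin 3)
    (hk : ∀ u v : Fin 3 → ℝ, cross3 u v k = u ia * v ib - u ib * v ia) :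
    (fun x : ℝ => (chapDensity B κ (p + x • E) • chapY B κ (p + x • E)).2 k)
    = (fun x : ℝ =>
      (1 - κ * dot3 (p.2 + x • E.2) (B⁻¹.mulVec (p.2 + x • E.2))) ^ (-(1:ℝ)/2) *
        ((p.2 + x • E.2) ia * ((B⁻¹.mulVec (p.1 + x • E.1)) ib
            + κ * dot3 (p.2 + x • E.2) (B⁻¹.mulVec (p.1 + x • E.1))
                / (1 - κ * dot3 (p.2 + x • E.2) (B⁻¹.mulVec (p.2 + x • E.2)))
                * (B⁻¹.mulVec (p.2 + x • E.2)) ib)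
         - (p.2 + x • E.2) ib * ((B⁻¹.mulVec (p.1 + x • E.1)) ia
            + κ * dot3 (p.2 + x • E.2) (B⁻¹.mulVec (p.1 + x • E.1))
                / (1 - κ * dot3 (p.2 + x • E.2) (B⁻¹.mulVec (p.2 + x • E.2)))
                * (B⁻¹.mulVec (p.2 + x • E.2)) ia))) := by
  funext x
  simp only [chapDensity, chapY, chapOmega, Prod.smul_snd, Pi.smul_apply, smul_eq_mul,
    Prod.fst_add, Prod.snd_add, Prod.smul_fst, hk, Pi.add_apply]

/- ==================== main theorem ==================== -/


set_option maxHeartbeats 2000000 in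
/-- **Chaplygin's invariant measure on ℝ⁶.**  For symmetric invertible `B` and `κ ∈ ℝ`,
on the open set where `1 − κ⟨γ, B⁻¹γ⟩ > 0`, the divergence (trace of the Fréchet
derivative) of the vector field `f·Y` vanishes identically; i.e.
`f(γ) dL dγ` is an invariant measure of Chaplygin's marble equations. -/
theorem chaplygin_invariant_measure
    (B : Matrix (Fin 3) (Fin 3) ℝ) (hsym : Bᵀ = B) (hinv : IsUnit B.det) (κ : ℝ) :
    ∀ p : (Fin 3 → ℝ) × (Fin 3 → ℝ),
      0 < 1 - κ * dot3 p.2 (B⁻¹.mulVec p.2) →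
      LinearMap.trace ℝ ((Fin 3 → ℝ) × (Fin 3 → ℝ))
        (fderiv ℝ (fun q => chapDensity B κ q • chapY B κ q) p).toLinearMap = 0 := by
  intro p hpos
  have hdvalne : (1 - κ * dot3 p.2 (B⁻¹.mulVec p.2)) ≠ 0 := ne_of_gt hpos
  -- differentiability
  have hdd : DifferentiableAt ℝ (fun q : V6 => 1 - κ * dot3 q.2 (B⁻¹.mulVec q.2)) p :=
    (((diff_s B⁻¹).const_mul κ).const_sub 1) p
  have hdens : DifferentiableAt ℝ (fun q : V6 => chapDensity B κ q) p := by
    have := hdd.rpow_const (p := -(1:ℝ)/2) (Or.inl hdvalne)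
    simpa [chapDensity] using this
  have hnum : DifferentiableAt ℝ (fun q : V6 => κ * dot3 q.2 (B⁻¹.mulVec q.1)) p :=
    ((diff_t B⁻¹).const_mul κ) p
  have hquot : DifferentiableAt ℝ (fun q : V6 =>
      (κ * dot3 q.2 (B⁻¹.mulVec q.1)) / (1 - κ * dot3 q.2 (B⁻¹.mulVec q.2))) p :=
    by
      have heq : (fun q : V6 =>
          κ * dot3 q.2 (B⁻¹.mulVec q.1) / (1 - κ * dot3 q.2 (B⁻¹.mulVec q.2)))
          = fun q : V6 =>
            (κ * dot3 q.2 (B⁻¹.mulVec q.1)) * (1 - κ * dot3 q.2 (B⁻¹.mulVec q.2))⁻¹ := by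
        funext q; rw [div_eq_mul_inv]
      rw [heq]
      exact hnum.mul (hdd.inv hdvalne)
  have hOm : ∀ i, DifferentiableAt ℝ (fun q : V6 => chapOmega B κ q i) p := by
    intro i
    have heq : (fun q : V6 => chapOmega B κ q i) = fun q : V6 =>
        (B⁻¹.mulVec q.1) i
          + ((κ * dot3 q.2 (B⁻¹.mulVec q.1)) / (1 - κ * dot3 q.2 (B⁻¹.mulVec q.2)))
              * (B⁻¹.mulVec q.2) i := by
      funext q; simp [chapOmega]
    rw [heq]
    exact ((diff_mulVec_fst B⁻¹ i) p).add (hquot.mul ((diff_mulVec_snd B⁻¹ i) p))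
  have hcross1 : ∀ i : Fin 3, DifferentiableAt ℝ
      (fun q : V6 => cross3 q.1 (chapOmega B κ q) i) p := by
    intro i
    fin_cases i
    · have heq : (fun q : V6 => cross3 q.1 (chapOmega B κ q) 0)
          = fun q : V6 => q.1 1 * chapOmega B κ q 2 - q.1 2 * chapOmega B κ q 1 := by
        funext q; simp [cross3]
      show DifferentiableAt ℝ (fun q : V6 => cross3 q.1 (chapOmega B κ q) 0) p
      rw [heq]
      exact (((diff_fst_apply 1) p).mul (hOm 2)).sub (((diff_fst_apply 2) p).mul (hOm 1))
    · have heq : (fun q : V6 => cross3 q.1 (chapOmega B κ q) 1)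
          = fun q : V6 => q.1 2 * chapOmega B κ q 0 - q.1 0 * chapOmega B κ q 2 := by
        funext q; simp [cross3]
      show DifferentiableAt ℝ (fun q : V6 => cross3 q.1 (chapOmega B κ q) 1) p
      rw [heq]
      exact (((diff_fst_apply 2) p).mul (hOm 0)).sub (((diff_fst_apply 0) p).mul (hOm 2))
    · have heq : (fun q : V6 => cross3 q.1 (chapOmega B κ q) 2)
          = fun q : V6 => q.1 0 * chapOmega B κ q 1 - q.1 1 * chapOmega B κ q 0 := by
        funext q; simp [cross3]
      show DifferentiableAt ℝ (fun q : V6 => cross3 q.1 (chapOmega B κ q) 2) p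
      rw [heq]
      exact (((diff_fst_apply 0) p).mul (hOm 1)).sub (((diff_fst_apply 1) p).mul (hOm 0))
  have hcross2 : ∀ i : Fin 3, DifferentiableAt ℝ
      (fun q : V6 => cross3 q.2 (chapOmega B κ q) i) p := by
    intro i
    fin_cases i
    · have heq : (fun q : V6 => cross3 q.2 (chapOmega B κ q) 0)
          = fun q : V6 => q.2 1 * chapOmega B κ q 2 - q.2 2 * chapOmega B κ q 1 := by
        funext q; simp [cross3]
      show DifferentiableAt ℝ (fun q : V6 => cross3 q.2 (chapOmega B κ q) 0) p
      rw [heq]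
      exact (((diff_snd_apply 1) p).mul (hOm 2)).sub (((diff_snd_apply 2) p).mul (hOm 1))
    · have heq : (fun q : V6 => cross3 q.2 (chapOmega B κ q) 1)
          = fun q : V6 => q.2 2 * chapOmega B κ q 0 - q.2 0 * chapOmega B κ q 2 := by
        funext q; simp [cross3]
      show DifferentiableAt ℝ (fun q : V6 => cross3 q.2 (chapOmega B κ q) 1) p
      rw [heq]
      exact (((diff_snd_apply 2) p).mul (hOm 0)).sub (((diff_snd_apply 0) p).mul (hOm 2))
    · have heq : (fun q : V6 => cross3 q.2 (chapOmega B κ q) 2)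
          = fun q : V6 => q.2 0 * chapOmega B κ q 1 - q.2 1 * chapOmega B κ q 0 := by
        funext q; simp [cross3]
      show DifferentiableAt ℝ (fun q : V6 => cross3 q.2 (chapOmega B κ q) 2) p
      rw [heq]
      exact (((diff_snd_apply 0) p).mul (hOm 1)).sub (((diff_snd_apply 1) p).mul (hOm 0))
  have hY : DifferentiableAt ℝ (fun q : V6 => chapY B κ q) p := by
    have heq : (fun q : V6 => chapY B κ q)
        = fun q : V6 => (cross3 q.1 (chapOmega B κ q), cross3 q.2 (chapOmega B κ q)) := rfl
    rw [heq]
    exact DifferentiableAt.prodMk (differentiableAt_pi.2 hcross1) (differentiableAt_pi.2 hcross2)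
  have hF : DifferentiableAt ℝ (fun q : V6 => chapDensity B κ q • chapY B κ q) p :=
    hdens.smul hY
  -- directional derivatives
  have hdir : ∀ E : V6, HasDerivAt
      (fun x : ℝ => chapDensity B κ (p + x • E) • chapY B κ (p + x • E))
      (fderiv ℝ (fun q => chapDensity B κ q • chapY B κ q) p E) 0 := by
    intro E
    have hline : HasDerivAt (fun x : ℝ => p + x • E) E 0 := by
      simpa using ((hasDerivAt_id (0:ℝ)).smul_const E).const_add p
    have h0 : p + (0:ℝ) • E = p := by simp
    have hFd : HasFDerivAt (fun q => chapDensity B κ q • chapY B κ q)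
        (fderiv ℝ (fun q => chapDensity B κ q • chapY B κ q) p) (p + (0:ℝ) • E) := by
      rw [h0]; exact hF.hasFDerivAt
    exact hFd.comp_hasDerivAt 0 hline
  have hco1 : ∀ (E : V6) (k : Fin 3), HasDerivAt
      (fun x : ℝ => (chapDensity B κ (p + x • E) • chapY B κ (p + x • E)).1 k)
      ((fderiv ℝ (fun q => chapDensity B κ q • chapY B κ q) p E).1 k) 0 := by
    intro E k
    have := ((ContinuousLinearMap.proj (R := ℝ) (φ := fun _ : Fin 3 => ℝ) k).comp
      (ContinuousLinearMap.fst ℝ (Fin 3 → ℝ) (Fin 3 → ℝ))).hasFDerivAt.comp_hasDerivAt 0 (hdir E)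
    simpa [ContinuousLinearMap.coe_comp, Function.comp_def] using this
  have hco2 : ∀ (E : V6) (k : Fin 3), HasDerivAt
      (fun x : ℝ => (chapDensity B κ (p + x • E) • chapY B κ (p + x • E)).2 k)
      ((fderiv ℝ (fun q => chapDensity B κ q • chapY B κ q) p E).2 k) 0 := by
    intro E k
    have := ((ContinuousLinearMap.proj (R := ℝ) (φ := fun _ : Fin 3 => ℝ) k).comp
      (ContinuousLinearMap.snd ℝ (Fin 3 → ℝ) (Fin 3 → ℝ))).hasFDerivAt.comp_hasDerivAt 0 (hdir E)
    simpa [ContinuousLinearMap.coe_comp, Function.comp_def] using this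
  -- identification of diagonal entries
  have key1 : ∀ (E : V6) (ia ib k : Fin 3),
      (∀ u v : Fin 3 → ℝ, cross3 u v k = u ia * v ib - u ib * v ia) →
      (fderiv ℝ (fun q => chapDensity B κ q • chapY B κ q) p E).1 k
        = VALg B⁻¹ κ p.1 p.2 E.1 E.2 p.1 E.1 ia ib := by
    intro E ia ib k hk
    exact HasDerivAt.unique ((comp_eq1 B κ p E ia ib k hk) ▸ (hco1 E k))
      (blockAux B⁻¹ κ p.1 p.2 E.1 E.2 p.1 E.1 ia ib hpos)
  have key2 : ∀ (E : V6) (ia ib k : Fin 3),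
      (∀ u v : Fin 3 → ℝ, cross3 u v k = u ia * v ib - u ib * v ia) →
      (fderiv ℝ (fun q => chapDensity B κ q • chapY B κ q) p E).2 k
        = VALg B⁻¹ κ p.1 p.2 E.1 E.2 p.2 E.2 ia ib := by
    intro E ia ib k hk
    exact HasDerivAt.unique ((comp_eq2 B κ p E ia ib k hk) ▸ (hco2 E k))
      (blockAux B⁻¹ κ p.1 p.2 E.1 E.2 p.2 E.2 ia ib hpos)
  have hk0 : ∀ u v : Fin 3 → ℝ, cross3 u v 0 = u 1 * v 2 - u 2 * v 1 := by
    intro u v; simp [cross3]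
  have hk1 : ∀ u v : Fin 3 → ℝ, cross3 u v 1 = u 2 * v 0 - u 0 * v 2 := by
    intro u v; simp [cross3]
  have hk2 : ∀ u v : Fin 3 → ℝ, cross3 u v 2 = u 0 * v 1 - u 1 * v 0 := by
    intro u v; simp [cross3]
  rw [trace_formula]
  simp only [ContinuousLinearMap.coe_coe, Fin.sum_univ_three]
  rw [key1 _ 1 2 0 hk0, key1 _ 2 0 1 hk1, key1 _ 0 1 2 hk2,
      key2 _ 1 2 0 hk0, key2 _ 2 0 1 hk1, key2 _ 0 1 2 hk2]
  have hct : ∀ i j, B⁻¹ i j = B⁻¹ j i := by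
    intro i j
    have h : (B⁻¹)ᵀ = B⁻¹ := by
      rw [Matrix.transpose_nonsing_inv, hsym]
    conv_lhs => rw [← h]
    rfl
  simp only [VALg]
  rw [Real.rpow_sub_one hdvalne]
  set D := 1 - κ * dot3 p.2 (B⁻¹.mulVec p.2) with hDdef
  set u := D ^ (-(1:ℝ)/2) with hu
  have hDne : D ≠ 0 := hdvalne
  have hfr : ∀ x y : ℝ, (x * D - y) / D ^ 2 = x / D - y / D ^ 2 := by
    intro x y
    rw [sub_div, pow_two, mul_div_mul_right _ _ hDne]
  simp only [hfr]
  have f01 : ((0:Fin 3) = 1) = False := by decide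
  have f02 : ((0:Fin 3) = 2) = False := by decide
  have f10 : ((1:Fin 3) = 0) = False := by decide
  have f12 : ((1:Fin 3) = 2) = False := by decide
  have f20 : ((2:Fin 3) = 0) = False := by decide
  have f21 : ((2:Fin 3) = 1) = False := by decide
  simp only [dot3, Matrix.mulVec, dotProduct, Fin.sum_univ_three, Pi.single_apply,
    Pi.zero_apply, mul_zero, zero_mul, add_zero, zero_add, mul_one,
    f01, f02, f10, f12, f20, f21, if_true, if_false, eq_self_iff_true, ite_true, ite_false]
  rw [hct 1 0, hct 2 0, hct 2 1]
  ring
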